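/- Let ε > 0, p, q ∈ (1,∞), and let A_ε = [[ε, 1],[1, ε]] ∈ ℝ^{2×2}. If τ = ((1−ε)/(1+ε))^2 · (p−1)/(q−1) > 1, then the function f(x) = ‖A_ε x‖_p / ‖x‖_q has at least three distinct positive critical points on the segment {(t, 1−t) : t ∈ (0,1)}; equivalently, the function ψ(t) = t^{q−1}[(tε + 1 − t)^{p−1} + ε(ε + t − tε)^{p−1}] satisfies ψ(t) = ψ(1−t) for at least three distinct values t ∈ (0,1). -/

import Mathlib

theorem stmt15 (ε p q : ℝ) (hε : 0 < ε) (hp : 1 < p) (hq : 1 < q)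
    (τ : ℝ) (hτdef : τ = ((1 - ε) / (1 + ε)) ^ 2 * ((p - 1) / (q - 1)))
    (hτ : 1 < τ)
    (ψ : ℝ → ℝ)
    (hψ : ψ = fun t => t ^ (q - 1) *
      ((t * ε + 1 - t) ^ (p - 1) + ε * (ε + t - t * ε) ^ (p - 1))) :
    ∃ t₁ t₂ t₃ : ℝ, t₁ ∈ Set.Ioo (0:ℝ) 1 ∧ t₂ ∈ Set.Ioo (0:ℝ) 1 ∧
      t₃ ∈ Set.Ioo (0:ℝ) 1 ∧ t₁ ≠ t₂ ∧ t₁ ≠ t₃ ∧ t₂ ≠ t₃ ∧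
      ψ t₁ = ψ (1 - t₁) ∧ ψ t₂ = ψ (1 - t₂) ∧ ψ t₃ = ψ (1 - t₃) := by
  have hq1 : (0:ℝ) < q - 1 := by linarith
  have hp1 : (0:ℝ) < p - 1 := by linarith
  -- key inequality from τ > 1
  have hkey : (1 + ε) ^ 2 * (q - 1) < (1 - ε) ^ 2 * (p - 1) := by
    rw [hτdef, div_pow, div_mul_div_comm, one_lt_div (by positivity)] at hτ
    exact hτ
  set c : ℝ := (1 + ε) / 2 with hc
  have hcpos : (0:ℝ) < c := by positivity
  -- continuity of ψ
  have hψcont : Continuous ψ := by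
    subst hψ
    apply Continuous.mul
    · exact continuous_id.rpow_const (fun x => Or.inr (le_of_lt hq1))
    · apply Continuous.add
      · exact (by continuity : Continuous fun t : ℝ => t * ε + 1 - t).rpow_const
          (fun x => Or.inr (le_of_lt hp1))
      · exact continuous_const.mul
          ((by continuity : Continuous fun t : ℝ => ε + t - t * ε).rpow_const
            (fun x => Or.inr (le_of_lt hp1)))
  set g : ℝ → ℝ := fun t => ψ t - ψ (1 - t) with hg
  have hgcont : Continuous g := hψcont.sub (hψcont.comp (continuous_const.sub continuous_id))
  -- derivative of ψ at 1/2
  set D : ℝ := (q - 1) * (1/2:ℝ) ^ (q - 2) * ((1 + ε) * c ^ (p - 1))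
      + (1/2:ℝ) ^ (q - 1) * (-(1 - ε) ^ 2 * (p - 1) * c ^ (p - 2)) with hD
  have hne1 : (1/2:ℝ) * ε + 1 - 1/2 ≠ 0 := ne_of_gt (by linarith)
  have hne2 : ε + 1/2 - (1/2:ℝ) * ε ≠ 0 := by nlinarith
  have hu := Real.hasDerivAt_rpow_const (x := (1/2:ℝ)) (p := q - 1)
      (Or.inl (by norm_num))
  have hl1 : HasDerivAt (fun t : ℝ => t * ε + 1 - t) (ε - 1) (1/2) := by
    have := (((hasDerivAt_id (1/2:ℝ)).mul_const ε).add_const 1).sub (hasDerivAt_id (1/2:ℝ))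
    refine this.congr_deriv ?_
    ring
  have hl2 : HasDerivAt (fun t : ℝ => ε + t - t * ε) (1 - ε) (1/2) := by
    have := ((hasDerivAt_const (1/2:ℝ) ε).add (hasDerivAt_id (1/2:ℝ))).sub
      ((hasDerivAt_id (1/2:ℝ)).mul_const ε)
    refine this.congr_deriv ?_
    ring
  have hA := hl1.rpow_const (p := p - 1) (Or.inl hne1)
  have hB := (hl2.rpow_const (p := p - 1) (Or.inl hne2)).const_mul ε
  have hψd : HasDerivAt ψ D (1/2) := by
    subst hψ
    have := hu.mul (hA.add hB)
    refine this.congr_deriv ?_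
    simp only [Pi.add_apply]
    have e1 : (1/2:ℝ) * ε + 1 - 1/2 = c := by rw [hc]; ring
    have e2 : ε + 1/2 - (1/2:ℝ) * ε = c := by rw [hc]; ring
    have e3 : q - 1 - 1 = q - 2 := by ring
    have e4 : p - 1 - 1 = p - 2 := by ring
    rw [hD, e1, e2, e3, e4]
    ring
  have hDneg : D < 0 := by
    have hcp : c ^ (p - 1) = c ^ (p - 2) * c := by
      rw [show p - 1 = p - 2 + 1 by ring, Real.rpow_add hcpos, Real.rpow_one]
    have hqp : (1/2:ℝ) ^ (q - 1) = (1/2:ℝ) ^ (q - 2) * (1/2) := by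
      rw [show q - 1 = q - 2 + 1 by ring, Real.rpow_add (by norm_num : (0:ℝ) < 1/2),
        Real.rpow_one]
    have hDeq : D = (1/2:ℝ) ^ (q - 2) * c ^ (p - 2) *
        (((q - 1) * (1 + ε) ^ 2 - (p - 1) * (1 - ε) ^ 2) / 2) := by
      rw [hD, hcp, hqp, hc]; ring
    rw [hDeq]
    apply mul_neg_of_pos_of_neg
    · exact mul_pos (Real.rpow_pos_of_pos (by norm_num) _) (Real.rpow_pos_of_pos hcpos _)
    · have : (q - 1) * (1 + ε) ^ 2 - (p - 1) * (1 - ε) ^ 2 < 0 := by nlinarith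
      linarith
  -- derivative of g at 1/2
  have hψd' : HasDerivAt ψ D ((fun t : ℝ => 1 - t) (1/2)) := by
    rw [show ((fun t : ℝ => 1 - t) (1/2) : ℝ) = 1/2 by norm_num]
    exact hψd
  have hneg : HasDerivAt (fun t : ℝ => 1 - t) (-1) (1/2) := by
    have := (hasDerivAt_const (1/2:ℝ) 1).sub (hasDerivAt_id (1/2:ℝ))
    refine this.congr_deriv ?_
    ring
  have hgd : HasDerivAt g (D - D * (-1)) (1/2) := hψd.sub (hψd'.comp (1/2) hneg)
  have hgd0 : D - D * (-1) < 0 := by linarith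
  -- find s > 1/2 with g s < 0
  rw [hasDerivAt_iff_tendsto_slope] at hgd
  have hslope : ∀ᶠ y in nhdsWithin (1/2:ℝ) {(1/2:ℝ)}ᶜ, slope g (1/2) y < 0 :=
    hgd.eventually_lt_const hgd0
  have hle : nhdsWithin (1/2:ℝ) (Set.Ioi (1/2:ℝ)) ≤ nhdsWithin (1/2:ℝ) {(1/2:ℝ)}ᶜ :=
    nhdsWithin_mono _ (fun x hx => ne_of_gt hx)
  have hmem : Set.Ioo (1/2:ℝ) 1 ∈ nhdsWithin (1/2:ℝ) (Set.Ioi (1/2:ℝ)) :=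
    Ioo_mem_nhdsGT_of_mem (by constructor <;> norm_num)
  have hex : ∃ s, slope g (1/2) s < 0 ∧ s ∈ Set.Ioo (1/2:ℝ) 1 :=
    ((hslope.filter_mono hle).and (Filter.eventually_of_mem hmem (fun x hx => hx))).exists
  obtain ⟨s, hs_slope, hs_mem⟩ := hex
  have hg_half : g (1/2) = 0 := by
    rw [hg]
    norm_num
  have hgs : g s < 0 := by
    rw [slope_def_field] at hs_slope
    have hpos : (0:ℝ) < s - 1/2 := by linarith [hs_mem.1]
    have := (div_neg_iff).mp hs_slope
    rcases this with ⟨h1, h2⟩ | ⟨h1, h2⟩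
    · linarith
    · rw [hg_half] at h1; linarith [hg_half]
  -- g 1 > 0
  have hg1 : 0 < g 1 := by
    rw [hg, hψ]
    norm_num
    rw [Real.zero_rpow (by linarith : q - 1 ≠ 0)]
    have := Real.rpow_pos_of_pos hε (p - 1)
    nlinarith
  -- IVT
  have hsub := intermediate_value_Ioo (le_of_lt hs_mem.2) hgcont.continuousOn
  have h0mem : (0:ℝ) ∈ Set.Ioo (g s) (g 1) := ⟨hgs, hg1⟩
  obtain ⟨t₃, ht₃mem, ht₃⟩ := hsub h0mem
  have ht₃half : 1/2 < t₃ := lt_trans hs_mem.1 ht₃mem.1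
  have ht₃1 : t₃ < 1 := ht₃mem.2
  have hgt₃ : ψ t₃ = ψ (1 - t₃) := by
    have : ψ t₃ - ψ (1 - t₃) = 0 := ht₃
    linarith
  refine ⟨1 - t₃, 1/2, t₃, ⟨by linarith, by linarith⟩, ⟨by norm_num, by norm_num⟩,
    ⟨by linarith, ht₃1⟩, by intro h; rw [← h] at ht₃half; linarith,
    by intro h; linarith [h ▸ ht₃half],
    by intro h; rw [h] at ht₃half; linarith, ?_, by norm_num, hgt₃⟩
  rw [show 1 - (1 - t₃) = t₃ by ring]
  exact hgt₃.symm
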